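/- The grounding ordinal of the disjoint union of a family of AFs equals the supremum of the grounding ordinals of the components. -/

import Mathlib

def defenseFn {A : Type*} (att : A → A → Prop) (S : Set A) : Set A :=
  {x | ∀ y, att y x → ∃ z ∈ S, att z y}

/-- `G` is the transfinite iteration of the defense function from `∅`. -/
def IsIter {A : Type*} (att : A → A → Prop) (G : Ordinal → Set A) : Prop :=
  G 0 = ∅ ∧ (∀ β : Ordinal, G (β + 1) = defenseFn att (G β)) ∧
    ∀ l : Ordinal, Order.IsSuccLimit l → G l = ⋃ β ∈ Set.Iio l, G β

/-- The attack relation of the disjoint union of a family of AFs. -/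
def sigmaAtt {ι : Type} {A : ι → Type} (att : ∀ i, A i → A i → Prop) :
    (Σ i, A i) → (Σ i, A i) → Prop :=
  fun x y => ∃ h : x.1 = y.1, att y.1 (h ▸ x.2) y.2

section Aux

variable {A : Type*} {att : A → A → Prop} {G : Ordinal → Set A}

lemma defenseFn_mono {S T : Set A} (h : S ⊆ T) : defenseFn att S ⊆ defenseFn att T := by
  intro x hx y hy
  obtain ⟨z, hz, hzy⟩ := hx y hy
  exact ⟨z, h hz, hzy⟩

lemma IsIter.mono (hG : IsIter att G) : ∀ β α : Ordinal, β ≤ α → G β ⊆ G α := by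
  intro β
  induction β using Ordinal.induction with
  | _ β IH =>
    intro α hβα
    rcases Ordinal.zero_or_succ_or_isSuccLimit β with h0 | ⟨δ, rfl⟩ | hlim
    · subst h0; rw [hG.1]; exact Set.empty_subset _
    · rcases Ordinal.zero_or_succ_or_isSuccLimit α with h0 | ⟨γ, rfl⟩ | hlima
      · subst h0
        exact absurd (lt_of_lt_of_le (Order.lt_succ δ) hβα) (by simp : ¬ δ < 0)
      · have hδγ : δ ≤ γ := by
          rwa [Order.succ_le_succ_iff] at hβα
        rw [← Ordinal.add_one_eq_succ, ← Ordinal.add_one_eq_succ, hG.2.1 δ, hG.2.1 γ]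
        exact defenseFn_mono (IH δ (Order.lt_succ δ) γ hδγ)
      · have hlt : Order.succ δ < α := lt_of_le_of_ne hβα (fun h => by
          rw [← h] at hlima; exact (Order.not_isSuccLimit_succ δ) hlima)
        rw [hG.2.2 α hlima]
        exact Set.subset_biUnion_of_mem hlt
    · rw [hG.2.2 β hlim]
      intro x hx
      simp only [Set.mem_iUnion, Set.mem_Iio] at hx
      obtain ⟨δ, hδ, hxδ⟩ := hx
      exact IH δ hδ α (le_of_lt (lt_of_lt_of_le hδ hβα)) hxδ

lemma IsIter.fixed_above (hG : IsIter att G) {α : Ordinal} (hα : G α = G (α + 1)) :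
    ∀ β : Ordinal, α ≤ β → G β = G α := by
  intro β
  induction β using Ordinal.induction with
  | _ β IH =>
    intro hle
    rcases eq_or_lt_of_le hle with h | h
    · exact (congrArg G h).symm
    · rcases Ordinal.zero_or_succ_or_isSuccLimit β with h0 | ⟨γ, rfl⟩ | hlim
      · exact absurd (h0 ▸ h) (by simp : ¬ α < 0)
      · have hαγ : α ≤ γ := by rwa [Order.lt_succ_iff] at h
        rw [← Ordinal.add_one_eq_succ, hG.2.1 γ, IH γ (Order.lt_succ γ) hαγ, ← hG.2.1 α, ← hα]
      · rw [hG.2.2 β hlim]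
        apply subset_antisymm
        · intro x hx
          simp only [Set.mem_iUnion, Set.mem_Iio] at hx
          obtain ⟨δ, hδ, hxδ⟩ := hx
          rcases le_total δ α with hc | hc
          · exact hG.mono δ α hc hxδ
          · exact (IH δ hδ hc) ▸ hxδ
        · exact Set.subset_biUnion_of_mem h

lemma IsIter.exists_fixed {A : Type v} {att : A → A → Prop} {G : Ordinal.{u} → Set A}
    [Small.{u} (Set A)] (hG : IsIter att G) : ∃ α, G α = G (α + 1) := by
  by_contra h
  push_neg at h
  have key : ∀ a b : Ordinal, a < b → G a ≠ G b := by
    intro a b hab heq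
    apply h a
    apply subset_antisymm (hG.mono a (a + 1) (le_of_lt (Ordinal.add_one_eq_succ a ▸ Order.lt_succ a)))
    calc G (a + 1) ⊆ G b := hG.mono _ _ (by rw [Ordinal.add_one_eq_succ]; exact Order.succ_le_of_lt hab)
    _ = G a := heq.symm
  exact not_injective_of_ordinal G fun a b hab => by
    by_contra hne
    rcases lt_or_gt_of_ne hne with hc | hc
    · exact key a b hc hab
    · exact key b a hc hab.symm

end Aux

lemma sigma_comp {ι : Type} {A : ι → Type}
    {att : ∀ i, A i → A i → Prop}
    {Gc : ∀ i, Ordinal → Set (A i)} (hGc : ∀ i, IsIter (att i) (Gc i))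
    {GU : Ordinal → Set (Σ i, A i)} (hGU : IsIter (sigmaAtt att) GU) :
    ∀ (α : Ordinal) (i : ι) (x : A i), (⟨i, x⟩ : Σ i, A i) ∈ GU α ↔ x ∈ Gc i α := by
  intro α
  induction α using Ordinal.induction with
  | _ α IH =>
    intro i x
    rcases Ordinal.zero_or_succ_or_isSuccLimit α with h0 | ⟨β, rfl⟩ | hlim
    · subst h0; rw [hGU.1, (hGc i).1]; simp
    · rw [← Ordinal.add_one_eq_succ, hGU.2.1 β, (hGc i).2.1 β]
      constructor
      · intro hx y hy
        obtain ⟨⟨j, w⟩, hw, hj, hatt⟩ := hx ⟨i, y⟩ ⟨rfl, hy⟩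
        dsimp at hj
        subst hj
        exact ⟨w, (IH β (Order.lt_succ β) j w).mp hw, hatt⟩
      · rintro hx ⟨j, w⟩ ⟨hj, hatt⟩
        dsimp at hj
        subst hj
        obtain ⟨z, hz, hzw⟩ := hx w hatt
        exact ⟨⟨j, z⟩, (IH β (Order.lt_succ β) j z).mpr hz, rfl, hzw⟩
    · rw [hGU.2.2 α hlim, (hGc i).2.2 α hlim]
      simp only [Set.mem_iUnion, Set.mem_Iio]
      constructor
      · rintro ⟨β, hβ, hx⟩
        exact ⟨β, hβ, (IH β hβ i x).mp hx⟩
      · rintro ⟨β, hβ, hx⟩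
        exact ⟨β, hβ, (IH β hβ i x).mpr hx⟩

/-- The grounding ordinal of a disjoint union of AFs is the supremum of the
grounding ordinals of the components. (The grounding ordinal is the least
ordinal at which the iteration of the defense function stabilizes.) -/
theorem grounding_ordinal_sigma {ι : Type} {A : ι → Type}
    (att : ∀ i, A i → A i → Prop)
    (Gc : ∀ i, Ordinal → Set (A i)) (hGc : ∀ i, IsIter (att i) (Gc i))
    (GU : Ordinal → Set (Σ i, A i)) (hGU : IsIter (sigmaAtt att) GU) :
    sInf {α : Ordinal | GU α = GU (α + 1)} =
      ⨆ i : ι, sInf {α : Ordinal | Gc i α = Gc i (α + 1)} := by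
  have comp := sigma_comp hGc hGU
  have equiv : ∀ α : Ordinal, GU α = GU (α + 1) ↔ ∀ i, Gc i α = Gc i (α + 1) := by
    intro α
    constructor
    · intro h i
      ext x
      rw [← comp α i x, ← comp (α + 1) i x, h]
    · intro h
      ext ⟨i, x⟩
      rw [comp α i x, comp (α + 1) i x, h i]
  have hneU : {α : Ordinal | GU α = GU (α + 1)}.Nonempty := hGU.exists_fixed
  have hnec : ∀ i, {α : Ordinal | Gc i α = Gc i (α + 1)}.Nonempty := fun i =>
    (hGc i).exists_fixed
  have hsU := csInf_mem hneU
  have hsc := fun i => csInf_mem (hnec i)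
  apply le_antisymm
  · apply csInf_le (OrderBot.bddBelow _)
    rw [Set.mem_setOf_eq, equiv]
    intro i
    have h1 : sInf {α : Ordinal | Gc i α = Gc i (α + 1)} ≤
        ⨆ j : ι, sInf {α : Ordinal | Gc j α = Gc j (α + 1)} :=
      Ordinal.le_iSup (fun j => sInf {α : Ordinal | Gc j α = Gc j (α + 1)}) i
    have h2 := (hGc i).fixed_above (hsc i)
    rw [h2 _ h1, h2 _ (h1.trans (le_self_add))]
  · apply Ordinal.iSup_le
    intro i
    apply csInf_le (OrderBot.bddBelow _)
    rw [Set.mem_setOf_eq]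
    exact ((equiv _).mp hsU) i
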